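/- Let f = (f₁,f₂) : ℝ² → ℝ² be smooth with rank(df)ₓ ≥ 1 at every point x. Then the map df : ℝ² → M₂(ℝ), x ↦ Jacobian of f at x, is transverse to the submanifold S₁ of rank-one matrices if and only if 0 is a regular value of the function x ↦ det(df)ₓ. -/

import Mathlib

noncomputable section

/-- Evaluation of a `2×2`-matrix-as-function at entry `(i,j)`, as a CLM. -/
def ev (i j : Fin 2) : (Fin 2 → Fin 2 → ℝ) →L[ℝ] ℝ :=
  (ContinuousLinearMap.proj j).comp (ContinuousLinearMap.proj (R := ℝ) (φ := fun _ : Fin 2 => Fin 2 → ℝ) i)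

@[simp] lemma ev_apply (i j : Fin 2) (M : Fin 2 → Fin 2 → ℝ) : ev i j M = M i j := rfl

/-- The derivative of the `2×2` determinant at `A`. -/
def Ddet (A : Fin 2 → Fin 2 → ℝ) : (Fin 2 → Fin 2 → ℝ) →L[ℝ] ℝ :=
  (A 0 0 • ev 1 1 + A 1 1 • ev 0 0) - (A 0 1 • ev 1 0 + A 1 0 • ev 0 1)

lemma hasFDerivAt_det2 (A : Fin 2 → Fin 2 → ℝ) :
    HasFDerivAt (fun M : Fin 2 → Fin 2 → ℝ => (Matrix.of M).det) (Ddet A) A := by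
  have h : (fun M : Fin 2 → Fin 2 → ℝ => (Matrix.of M).det)
      = fun M => M 0 0 * M 1 1 - M 0 1 * M 1 0 := by
    funext M; simp [Matrix.det_fin_two]
  rw [h]
  exact (((ev 0 0).hasFDerivAt (x := A)).mul ((ev 1 1).hasFDerivAt)).sub
    (((ev 0 1).hasFDerivAt (x := A)).mul ((ev 1 0).hasFDerivAt))

lemma Ddet_apply (A H : Fin 2 → Fin 2 → ℝ) :
    Ddet A H = (A 0 0 * H 1 1 + A 1 1 * H 0 0) - (A 0 1 * H 1 0 + A 1 0 * H 0 1) := by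
  simp [Ddet, smul_eq_mul]

lemma Ddet_ne_zero {A : Fin 2 → Fin 2 → ℝ} (hA : A ≠ 0) : Ddet A ≠ 0 := by
  intro h
  apply hA
  funext i j
  have h00 := congrArg (fun L : (Fin 2 → Fin 2 → ℝ) →L[ℝ] ℝ => L (Pi.single 1 (Pi.single 1 1))) h
  have h11 := congrArg (fun L : (Fin 2 → Fin 2 → ℝ) →L[ℝ] ℝ => L (Pi.single 0 (Pi.single 0 1))) h
  have h01 := congrArg (fun L : (Fin 2 → Fin 2 → ℝ) →L[ℝ] ℝ => L (Pi.single 1 (Pi.single 0 1))) h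
  have h10 := congrArg (fun L : (Fin 2 → Fin 2 → ℝ) →L[ℝ] ℝ => L (Pi.single 0 (Pi.single 1 1))) h
  simp [Ddet_apply, Pi.single_apply] at h00 h11 h01 h10
  fin_cases i <;> fin_cases j <;> simpa

/-- For a smooth `f : ℝ² → ℝ²` with `rank(df) ≥ 1` everywhere, the Jacobian map
`df : ℝ² → M₂(ℝ)` is transverse to the rank-one stratum `S₁` (whose tangent space at a rank-one
matrix is the kernel of the differential of `det`) iff `0` is a regular value of `det ∘ df`. -/
theorem stmt4 (f : (Fin 2 → ℝ) → (Fin 2 → ℝ)) (hf : ContDiff ℝ (⊤ : ℕ∞) f)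
    (J : (Fin 2 → ℝ) → (Fin 2 → Fin 2 → ℝ))
    (hJ : ∀ x i j, J x i j = fderiv ℝ f x (Pi.single j 1) i)
    (hrank : ∀ x, 1 ≤ (Matrix.of (J x)).rank) :
    (∀ x, (Matrix.of (J x)).det = 0 →
        LinearMap.range (fderiv ℝ J x : (Fin 2 → ℝ) →ₗ[ℝ] (Fin 2 → Fin 2 → ℝ)) ⊔
          LinearMap.ker (fderiv ℝ (fun M : Fin 2 → Fin 2 → ℝ => (Matrix.of M).det) (J x) :
            (Fin 2 → Fin 2 → ℝ) →ₗ[ℝ] ℝ) = ⊤)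
      ↔ (∀ x, (Matrix.of (J x)).det = 0 →
          fderiv ℝ (fun y => (Matrix.of (J y)).det) x ≠ 0) := by
  -- J is differentiable
  have hJeq : J = fun x i j => fderiv ℝ f x (Pi.single j 1) i := by
    funext x i j; exact hJ x i j
  have hdf : Differentiable ℝ (fderiv ℝ f) :=
    (hf.fderiv_right (m := (⊤:ℕ∞)) (by exact_mod_cast le_top)).differentiable (by simp)
  have hJdiff : Differentiable ℝ J := by
    rw [hJeq]
    rw [differentiable_pi]
    intro i
    rw [differentiable_pi]
    intro j
    exact ((ContinuousLinearMap.proj (R := ℝ) (φ := fun _ : Fin 2 => ℝ) i).comp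
      (ContinuousLinearMap.apply ℝ (Fin 2 → ℝ) (Pi.single j 1))).differentiable.comp hdf
  -- chain rule facts
  have key : ∀ x : Fin 2 → ℝ,
      fderiv ℝ (fun M : Fin 2 → Fin 2 → ℝ => (Matrix.of M).det) (J x) = Ddet (J x) ∧
      fderiv ℝ (fun y => (Matrix.of (J y)).det) x = (Ddet (J x)).comp (fderiv ℝ J x) := by
    intro x
    refine ⟨(hasFDerivAt_det2 (J x)).fderiv, ?_⟩
    exact ((hasFDerivAt_det2 (J x)).comp x (hJdiff x).hasFDerivAt).fderiv
  have hne : ∀ x : Fin 2 → ℝ, J x ≠ 0 := by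
    intro x hx
    have h := hrank x
    rw [hx, show Matrix.of (0 : Fin 2 → Fin 2 → ℝ) = 0 from rfl, Matrix.rank_zero] at h
    exact absurd h (by norm_num)
  constructor
  · intro H x hx
    have ⟨k1, k2⟩ := key x
    rw [k2]
    intro hzero
    have hsub : LinearMap.range (fderiv ℝ J x : (Fin 2 → ℝ) →ₗ[ℝ] (Fin 2 → Fin 2 → ℝ)) ≤
        LinearMap.ker (fderiv ℝ (fun M : Fin 2 → Fin 2 → ℝ => (Matrix.of M).det) (J x) :
          (Fin 2 → Fin 2 → ℝ) →ₗ[ℝ] ℝ) := by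
      rintro _ ⟨v, rfl⟩
      rw [LinearMap.mem_ker, k1]
      have := congrArg (fun L : (Fin 2 → ℝ) →L[ℝ] ℝ => L v) hzero
      simpa using this
    have := H x hx
    rw [sup_eq_right.mpr hsub] at this
    have hD := Ddet_ne_zero (hne x)
    apply hD
    ext H'
    have : H' ∈ LinearMap.ker (fderiv ℝ (fun M : Fin 2 → Fin 2 → ℝ => (Matrix.of M).det) (J x) :
        (Fin 2 → Fin 2 → ℝ) →ₗ[ℝ] ℝ) :=
      this ▸ Submodule.mem_top
    rw [LinearMap.mem_ker, k1] at this
    simpa using this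
  · intro H x hx
    have ⟨k1, k2⟩ := key x
    have hcomp := H x hx
    rw [k2] at hcomp
    obtain ⟨v, hv⟩ : ∃ v, Ddet (J x) (fderiv ℝ J x v) ≠ 0 := by
      by_contra h
      push_neg at h
      exact hcomp (by ext v; simpa using h v)
    rw [eq_top_iff]
    have := LinearMap.span_singleton_sup_ker_eq_top
      ((fderiv ℝ (fun M : Fin 2 → Fin 2 → ℝ => (Matrix.of M).det) (J x)) : (Fin 2 → Fin 2 → ℝ) →ₗ[ℝ] ℝ)
      (x := fderiv ℝ J x v) (by simp only [ContinuousLinearMap.coe_coe, k1]; exact hv)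
    refine le_trans (le_of_eq this.symm) (sup_le_sup ?_ (le_of_eq rfl))
    rw [Submodule.span_singleton_le_iff_mem]
    exact ⟨v, rfl⟩
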